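/- arXiv:2601.08453 — 2 statements merged into one kernel-verified Lean document; each statement's English description precedes it below -/
import Mathlib

section
/- Let m, r be positive integers and p a natural number with p ≥ r·m. Then S_r(p,m) = (p! / (m! · (r!)^m · (p−rm)!)) · M_r(p−rm, m). -/
/-- `stirlingAssoc r p m` is the `r`-associated Stirling number of the second kind:
the number of partitions of `{1,…,p}` into exactly `m` parts, each of size at least `r`. -/
noncomputable def stirlingAssoc (r p m : ℕ) : ℕ :=
  Nat.card {P : Finpartition (Finset.univ : Finset (Fin p)) //
    P.parts.card = m ∧ ∀ s ∈ P.parts, r ≤ s.card}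

open MeasureTheory in
/-- `momentM r m k` is the `k`-th moment of the sum of `m` i.i.d. Beta(1,r) random
variables, written as an integral over the cube `[0,1]^m`. -/
noncomputable def momentM (r m k : ℕ) : ℝ :=
  ∫ x in Set.Icc (0 : Fin m → ℝ) 1,
    (∑ i, x i) ^ k * ∏ i, (r : ℝ) * (1 - x i) ^ (r - 1)

open Finset MeasureTheory

/-! ### The one-dimensional Beta integral -/

private lemma fac_prod (r : ℕ) (hr : 0 < r) : ∀ a : ℕ,
    (r - 1).factorial * ∏ j ∈ range (a + 1), (r + j) = (r + a).factorial
  | 0 => by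
    rw [zero_add, range_one, prod_singleton, add_zero, mul_comm]
    exact Nat.mul_factorial_pred hr.ne'
  | a + 1 => by
    rw [prod_range_succ, ← mul_assoc, fac_prod r hr a, ← add_assoc, Nat.factorial_succ, mul_comm]

private lemma beta_nat (a r : ℕ) (hr : 0 < r) :
    ∫ x in (0:ℝ)..1, x ^ a * (1 - x) ^ (r - 1) =
      (a.factorial * (r-1).factorial : ℝ) / (a + r).factorial := by
  have hre : 0 < Complex.re (r : ℂ) := by simp [hr]
  have hb := Complex.betaIntegral_eval_nat_add_one_right hre a
  rw [Complex.betaIntegral_symm, Complex.betaIntegral] at hb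
  have hint : ∀ x : ℝ, x ∈ Set.uIcc (0:ℝ) 1 → ((x:ℂ) ^ ((a:ℂ) + 1 - 1) * (1 - (x:ℂ)) ^ ((r:ℂ) - 1))
      = ((x ^ a * (1 - x) ^ (r - 1) : ℝ) : ℂ) := by
    intro x _
    have h1 : (a:ℂ) + 1 - 1 = ((a : ℕ) : ℂ) := by ring
    have h2 : (r:ℂ) - 1 = ((r - 1 : ℕ) : ℂ) := by
      push_cast [Nat.cast_sub hr]; ring
    rw [h1, h2, Complex.cpow_natCast, Complex.cpow_natCast]
    push_cast
    ring
  rw [intervalIntegral.integral_congr hint, intervalIntegral.integral_ofReal] at hb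
  have hprod : (∏ j ∈ range (a + 1), ((r:ℂ) + j)) = ((∏ j ∈ range (a+1), (r + j) : ℕ) : ℂ) := by
    push_cast; rfl
  rw [hprod] at hb
  have hb2 : ((∫ x in (0:ℝ)..1, x ^ a * (1 - x) ^ (r - 1) : ℝ) : ℂ)
      = (((a.factorial : ℝ) / (∏ j ∈ range (a+1), (r + j) : ℕ) : ℝ) : ℂ) := by
    rw [hb]; push_cast; ring
  have hb3 := Complex.ofReal_inj.1 hb2
  rw [hb3, div_eq_div_iff (by positivity) (by positivity), add_comm a r, ← fac_prod r hr a]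
  push_cast
  ring

private lemma phi_int (a r : ℕ) (hr : 0 < r) :
    ∫ t in Set.Icc (0:ℝ) 1, t ^ a * ((r:ℝ) * (1 - t) ^ (r - 1)) =
      (a.factorial * r.factorial : ℝ) / (a + r).factorial := by
  rw [MeasureTheory.integral_Icc_eq_integral_Ioc,
    ← intervalIntegral.integral_of_le (zero_le_one)]
  have : ∀ t : ℝ, t ^ a * ((r:ℝ) * (1 - t) ^ (r - 1)) = (r:ℝ) * (t ^ a * (1 - t) ^ (r - 1)) := by
    intro t; ring
  simp_rw [this]
  rw [intervalIntegral.integral_const_mul, beta_nat a r hr,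
    mul_div_assoc', ← Nat.cast_mul, ← Nat.mul_factorial_pred hr.ne']
  push_cast
  ring_nf

private lemma ind_prod {m : ℕ} (f : Fin m → ℝ → ℝ) (x : Fin m → ℝ) :
    (Set.Icc (0:Fin m→ℝ) 1).indicator (fun y => ∏ i, f i (y i)) x
      = ∏ i, (Set.Icc (0:ℝ) 1).indicator (f i) (x i) := by
  have hx : x ∈ Set.Icc (0:Fin m→ℝ) 1 ↔ ∀ i, x i ∈ Set.Icc (0:ℝ) 1 := by
    simp [Set.mem_Icc, Pi.le_def, forall_and]
  by_cases h : x ∈ Set.Icc (0:Fin m→ℝ) 1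
  · rw [Set.indicator_of_mem h]
    exact Finset.prod_congr rfl fun i _ => (Set.indicator_of_mem (hx.1 h i) _).symm
  · rw [Set.indicator_of_notMem h]
    obtain ⟨i, hi⟩ := not_forall.1 (fun hh => h (hx.2 hh))
    exact (Finset.prod_eq_zero (mem_univ i) (Set.indicator_of_notMem hi _)).symm

/-- Evaluation of `momentM` as a finite sum over compositions. -/
private lemma momentM_eq (r m K : ℕ) (hr : 0 < r) :
    momentM r m K = ∑ k ∈ piAntidiag (univ : Finset (Fin m)) K,
      (Nat.multinomial univ k : ℝ) *
        ∏ i, (((k i).factorial * r.factorial : ℝ) / ((k i + r).factorial)) := by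
  classical
  set φ : ℕ → ℝ → ℝ := fun a t => t ^ a * ((r:ℝ) * (1 - t) ^ (r - 1)) with hφ
  have hpoint : ∀ x : Fin m → ℝ,
      (∑ i, x i) ^ K * ∏ i, (r : ℝ) * (1 - x i) ^ (r - 1)
        = ∑ k ∈ piAntidiag (univ : Finset (Fin m)) K,
            (Nat.multinomial univ k : ℝ) * ∏ i, φ (k i) (x i) := by
    intro x
    rw [Finset.sum_pow_eq_sum_piAntidiag univ (fun i => x i) K, Finset.sum_mul]
    refine Finset.sum_congr rfl fun k _ => ?_
    rw [mul_assoc, ← Finset.prod_mul_distrib]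
  have hcont : ∀ k : Fin m → ℕ, Continuous fun x : Fin m → ℝ => ∏ i, φ (k i) (x i) := by
    intro k
    refine continuous_finset_prod _ fun i _ => ?_
    fun_prop
  rw [momentM]
  rw [MeasureTheory.integral_congr_ae (Filter.Eventually.of_forall fun x => hpoint x)]
  rw [MeasureTheory.integral_finset_sum]
  · refine Finset.sum_congr rfl fun k _ => ?_
    rw [MeasureTheory.integral_const_mul]
    congr 1
    rw [← MeasureTheory.integral_indicator measurableSet_Icc]
    have : ∀ x : Fin m → ℝ, (Set.Icc (0:Fin m→ℝ) 1).indicator (fun y => ∏ i, φ (k i) (y i)) x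
        = ∏ i, (Set.Icc (0:ℝ) 1).indicator (φ (k i)) (x i) := ind_prod _
    rw [MeasureTheory.integral_congr_ae (Filter.Eventually.of_forall this)]
    rw [MeasureTheory.volume_pi]
    rw [MeasureTheory.integral_fintype_prod_eq_prod
      (fun i => (Set.Icc (0:ℝ) 1).indicator (φ (k i)))]
    refine Finset.prod_congr rfl fun i _ => ?_
    rw [MeasureTheory.integral_indicator measurableSet_Icc]
    exact phi_int (k i) r hr
  · intro k _
    apply MeasureTheory.Integrable.const_mul
    exact ((hcont k).continuousOn).integrableOn_compact isCompact_Icc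

/-! ### Counting functions with prescribed fiber sizes -/

private def fib {p m : ℕ} (g : Fin p → Fin m) (j : Fin m) : Finset (Fin p) :=
  univ.filter fun i => g i = j

private lemma mem_fib {p m : ℕ} {g : Fin p → Fin m} {j : Fin m} {i : Fin p} :
    i ∈ fib g j ↔ g i = j := by simp [fib]

private lemma prod_X_eq_monomial {p m : ℕ} (g : Fin p → Fin m) (s : Finset (Fin p)) :
    ∏ i ∈ s, MvPolynomial.X (R := ℕ) (g i)
      = MvPolynomial.monomial (∑ i ∈ s, Finsupp.single (g i) 1) (1 : ℕ) := by
  classical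
  induction s using Finset.induction with
  | empty => simp
  | insert a s h ih =>
    rw [Finset.prod_insert h, Finset.sum_insert h, ih, MvPolynomial.X,
      MvPolynomial.monomial_mul, one_mul]

private lemma card_fiber {p m : ℕ} (k : Fin m → ℕ) (hk : ∑ j, k j = p) :
    (univ.filter fun g : Fin p → Fin m => ∀ j, (fib g j).card = k j).card
      = Nat.multinomial univ k := by
  classical
  set κ : Fin m →₀ ℕ := Finsupp.equivFunOnFinite.symm k with hκ
  have hκa : ∀ j, κ j = k j := fun j => rfl
  set w : (Fin p → Fin m) → (Fin m →₀ ℕ) := fun g => ∑ i, Finsupp.single (g i) 1 with hw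
  have hwa : ∀ (g : Fin p → Fin m) j, w g j = (fib g j).card := by
    intro g j
    rw [hw]
    rw [Finsupp.finset_sum_apply]
    rw [fib, Finset.card_filter]
    refine Finset.sum_congr rfl fun i _ => ?_
    rw [Finsupp.single_apply]
  have hA : ((∑ j, MvPolynomial.X (R := ℕ) j) ^ p)
      = ∑ g : Fin p → Fin m, MvPolynomial.monomial (w g) 1 := by
    have h1 : ((∑ j, MvPolynomial.X (R := ℕ) j) ^ p)
        = ∏ _i : Fin p, (∑ j : Fin m, MvPolynomial.X (R := ℕ) j) := by
      rw [Finset.prod_const, Finset.card_univ, Fintype.card_fin]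
    rw [h1, Finset.prod_univ_sum]
    rw [Fintype.piFinset_univ]
    exact Finset.sum_congr rfl fun g _ => prod_X_eq_monomial g univ
  have hC1 : MvPolynomial.coeff κ ((∑ j, MvPolynomial.X (R := ℕ) j) ^ p)
      = (univ.filter fun g : Fin p → Fin m => ∀ j, (fib g j).card = k j).card := by
    rw [hA, MvPolynomial.coeff_sum]
    simp_rw [MvPolynomial.coeff_monomial]
    have heq : ∀ g : Fin p → Fin m,
        (w g = κ) = (∀ j, (fib g j).card = k j) := by
      intro g
      refine propext ?_
      rw [Finsupp.ext_iff]
      exact forall_congr' fun j => by rw [hwa, hκa]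
    simp_rw [heq]
    rw [Finset.sum_boole]
    simp
  have hC2 : MvPolynomial.coeff κ ((∑ j, MvPolynomial.X (R := ℕ) j) ^ p)
      = Nat.multinomial univ k := by
    rw [Finset.sum_pow_eq_sum_piAntidiag univ (fun j => MvPolynomial.X (R := ℕ) j) p,
      MvPolynomial.coeff_sum]
    have hmono : ∀ k' : Fin m → ℕ,
        (∏ j, MvPolynomial.X (R := ℕ) j ^ k' j)
          = MvPolynomial.monomial (Finsupp.equivFunOnFinite.symm k') 1 := by
      intro k'
      rw [← MvPolynomial.prod_X_pow_eq_monomial]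
      refine (Finset.prod_subset (Finset.subset_univ _) ?_).symm
      intro j _ hj
      have : Finsupp.equivFunOnFinite.symm k' j = 0 := by
        simpa using (Finsupp.notMem_support_iff.1 hj)
      rw [show k' j = Finsupp.equivFunOnFinite.symm k' j from rfl, this, pow_zero]
    have hterm : ∀ k' ∈ piAntidiag (univ : Finset (Fin m)) p, k' ≠ k →
        MvPolynomial.coeff κ
          ((Nat.multinomial univ k' : MvPolynomial (Fin m) ℕ) * ∏ j, MvPolynomial.X j ^ k' j)
          = 0 := by
      intro k' _ hne
      rw [hmono, ← MvPolynomial.C_eq_coe_nat, MvPolynomial.coeff_C_mul,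
        MvPolynomial.coeff_monomial]
      rw [if_neg, mul_zero]
      intro hcon
      exact hne (Finsupp.equivFunOnFinite.symm.injective (hκ ▸ hcon))
    rw [Finset.sum_eq_single k hterm]
    · rw [hmono, ← MvPolynomial.C_eq_coe_nat, MvPolynomial.coeff_C_mul,
        MvPolynomial.coeff_monomial, hκ, if_pos rfl, mul_one, Nat.cast_id]
    · intro hcon
      exact absurd (by simp [hk]) hcon
  rw [← hC1, hC2]

/-! ### Partitions from fibers -/

section Partitions

variable {p m r : ℕ}

private lemma fib_disj {g : Fin p → Fin m} {j j' : Fin m} (h : j ≠ j') :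
    Disjoint (fib g j) (fib g j') := by
  rw [Finset.disjoint_left]
  intro i hi hi'
  exact h (mem_fib.1 hi ▸ (mem_fib.1 hi').symm ▸ rfl)

private lemma fib_injective {g : Fin p → Fin m} (hg : ∀ j, (fib g j).Nonempty) :
    Function.Injective (fib g) := by
  intro j j' h
  obtain ⟨i, hi⟩ := hg j
  have hi' : i ∈ fib g j' := h ▸ hi
  rw [← mem_fib.1 hi, mem_fib.1 hi']

private def fpart (g : Fin p → Fin m) (hg : ∀ j, (fib g j).Nonempty) :
    Finpartition (univ : Finset (Fin p)) where
  parts := univ.image (fib g)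
  supIndep := by
    rw [Finset.supIndep_iff_pairwiseDisjoint]
    intro s hs t ht hst
    simp only [Finset.coe_image, Set.mem_image, Finset.mem_coe] at hs ht
    obtain ⟨j, -, rfl⟩ := hs
    obtain ⟨j', -, rfl⟩ := ht
    exact fib_disj fun h => hst (by rw [h])
  sup_parts := by
    apply le_antisymm
    · exact Finset.sup_le fun s _ => Finset.le_iff_subset.2 (Finset.subset_univ s)
    · intro i _
      rw [Finset.mem_sup]
      exact ⟨fib g (g i), Finset.mem_image_of_mem _ (mem_univ _), mem_fib.2 rfl⟩
  bot_notMem := by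
    simp only [Finset.bot_eq_empty, Finset.mem_image, not_exists]
    rintro j ⟨-, hj⟩
    exact (hg j).ne_empty hj

private lemma fpart_parts (g : Fin p → Fin m) (hg) :
    (fpart g hg).parts = univ.image (fib g) := rfl

private lemma part_fpart (g : Fin p → Fin m) (hg) (i : Fin p) :
    (fpart g hg).part i = fib g (g i) :=
  Finpartition.part_eq_of_mem _ (Finset.mem_image_of_mem _ (mem_univ _)) (mem_fib.2 rfl)

private lemma fpart_card (g : Fin p → Fin m) (hg) : (fpart g hg).parts.card = m := by
  rw [fpart_parts, Finset.card_image_of_injective _ (fib_injective hg), card_univ,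
    Fintype.card_fin]

/-- a fixed labeling of the parts of a partition with `m` parts -/
private noncomputable def cP (P : Finpartition (univ : Finset (Fin p)))
    (hP : P.parts.card = m) : {s // s ∈ P.parts} ≃ Fin m :=
  P.parts.equivFin.trans (finCongr hP)

private lemma cP_congr (P Q : Finpartition (univ : Finset (Fin p))) (hP : P.parts.card = m)
    (hQ : Q.parts.card = m) (hPQ : P = Q) (s : Finset (Fin p)) (hs : s ∈ P.parts)
    (hs' : s ∈ Q.parts) : cP P hP ⟨s, hs⟩ = cP Q hQ ⟨s, hs'⟩ := by
  subst hPQ; rfl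

private noncomputable def gOf (P : Finpartition (univ : Finset (Fin p)))
    (hP : P.parts.card = m) (σ : Fin m ≃ Fin m) : Fin p → Fin m :=
  fun i => σ.symm (cP P hP ⟨P.part i, P.part_mem.2 (mem_univ i)⟩)

private lemma fib_gOf (P : Finpartition (univ : Finset (Fin p))) (hP : P.parts.card = m)
    (σ : Fin m ≃ Fin m) (j : Fin m) :
    fib (gOf P hP σ) j = ((cP P hP).symm (σ j)).1 := by
  ext i
  rw [mem_fib, gOf, Equiv.symm_apply_eq, ← Equiv.eq_symm_apply]
  constructor
  · intro h
    have := congrArg Subtype.val h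
    simp only at this
    rw [← this]
    exact P.mem_part (mem_univ i)
  · intro hi
    exact Subtype.ext (P.part_eq_of_mem ((cP P hP).symm (σ j)).2 hi)

variable (p m r) in
private noncomputable def Eq1 (hr : 0 < r) :
    {g : Fin p → Fin m // ∀ j, r ≤ (fib g j).card} ≃
      ({P : Finpartition (univ : Finset (Fin p)) //
          P.parts.card = m ∧ ∀ s ∈ P.parts, r ≤ s.card} × (Fin m ≃ Fin m)) := by
  have hne : ∀ (g : Fin p → Fin m), (∀ j, r ≤ (fib g j).card) → ∀ j, (fib g j).Nonempty :=
    fun g hg j => Finset.card_pos.1 (lt_of_lt_of_le hr (hg j))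
  refine
  { toFun := fun t =>
      ⟨⟨fpart t.1 (hne t.1 t.2), fpart_card t.1 (hne t.1 t.2), ?_⟩,
        (Equiv.ofBijective (fun j => (⟨fib t.1 j, Finset.mem_image_of_mem _ (mem_univ j)⟩ :
          {s // s ∈ (fpart t.1 (hne t.1 t.2)).parts})) ⟨?_, ?_⟩).trans
          (cP _ (fpart_card t.1 (hne t.1 t.2)))⟩
    invFun := fun Pσ => ⟨gOf Pσ.1.1 Pσ.1.2.1 Pσ.2, ?_⟩
    left_inv := ?_
    right_inv := ?_ }
  · intro s hs
    rw [fpart_parts] at hs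
    obtain ⟨j, -, rfl⟩ := Finset.mem_image.1 hs
    exact t.2 j
  · intro j j' h
    exact fib_injective (hne t.1 t.2) (congrArg Subtype.val h)
  · rintro ⟨s, hs⟩
    obtain ⟨j, -, rfl⟩ := Finset.mem_image.1 hs
    exact ⟨j, rfl⟩
  · intro j
    rw [fib_gOf]
    exact Pσ.1.2.2 _ ((cP Pσ.1.1 Pσ.1.2.1).symm (Pσ.2 j)).2
  · rintro ⟨g, hg⟩
    apply Subtype.ext
    funext i
    show gOf _ _ _ i = g i
    rw [gOf]
    simp only [Equiv.symm_trans_apply, Equiv.symm_apply_apply]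
    rw [Equiv.symm_apply_eq]
    apply Subtype.ext
    show (fpart g _).part i = fib g (g i)
    exact part_fpart g _ i
  · rintro ⟨⟨P, hPm, hPr⟩, σ⟩
    have hg2 : ∀ j, (fib (gOf P hPm σ) j).Nonempty := by
      intro j
      rw [fib_gOf]
      exact P.nonempty_of_mem_parts ((cP P hPm).symm (σ j)).2
    have hparts : (fpart (gOf P hPm σ) hg2).parts = P.parts := by
      rw [fpart_parts]
      have h1 : univ.image (fib (gOf P hPm σ))
          = univ.image (fun j => ((cP P hPm).symm (σ j)).1) :=
        Finset.image_congr fun j _ => fib_gOf P hPm σ j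
      rw [h1]
      have h2 : (fun j => ((cP P hPm).symm (σ j)).1)
          = Subtype.val ∘ (σ.trans (cP P hPm).symm) := rfl
      rw [h2, ← Finset.image_image, Finset.image_univ_equiv, Finset.univ_eq_attach,
        Finset.attach_image_val]
    have hPeq : fpart (gOf P hPm σ) hg2 = P := Finpartition.ext hparts
    refine Prod.ext (Subtype.ext hPeq) ?_
    apply Equiv.ext
    intro j
    rw [Equiv.trans_apply]
    refine Eq.trans (cP_congr (fpart (gOf P hPm σ) hg2) P (fpart_card _ hg2) hPm hPeq
      (fib (gOf P hPm σ) j) (Finset.mem_image_of_mem _ (mem_univ j))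
      ((fib_gOf P hPm σ j) ▸ ((cP P hPm).symm (σ j)).2)) ?_
    have : (⟨fib (gOf P hPm σ) j, (fib_gOf P hPm σ j) ▸ ((cP P hPm).symm (σ j)).2⟩ :
        {s // s ∈ P.parts}) = (cP P hPm).symm (σ j) := Subtype.ext (fib_gOf P hPm σ j)
    rw [this, Equiv.apply_symm_apply]

variable (p m r) in
private lemma count1 (hr : 0 < r) :
    Nat.card {g : Fin p → Fin m // ∀ j, r ≤ (fib g j).card}
      = stirlingAssoc r p m * m.factorial := by
  rw [Nat.card_congr (Eq1 p m r hr), Nat.card_prod, stirlingAssoc]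
  congr 1
  rw [Nat.card_eq_fintype_card, Fintype.card_equiv (Equiv.refl _), Fintype.card_fin]

variable (p m r) in
private lemma count2 :
    Nat.card {g : Fin p → Fin m // ∀ j, r ≤ (fib g j).card}
      = ∑ k ∈ (piAntidiag (univ : Finset (Fin m)) p).filter (fun k => ∀ j, r ≤ k j),
          Nat.multinomial univ k := by
  classical
  rw [Nat.card_eq_fintype_card, Fintype.card_subtype]
  rw [Finset.card_eq_sum_card_fiberwise
    (f := fun (g : Fin p → Fin m) => fun j => (fib g j).card)
    (t := (piAntidiag (univ : Finset (Fin m)) p).filter (fun k => ∀ j, r ≤ k j))]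
  · refine Finset.sum_congr rfl fun k hk => ?_
    rw [Finset.mem_filter, Finset.mem_piAntidiag] at hk
    rw [Finset.filter_filter]
    have : ∀ g : Fin p → Fin m,
        ((∀ j, r ≤ (fib g j).card) ∧ (fun j => (fib g j).card) = k)
          ↔ (∀ j, (fib g j).card = k j) := by
      intro g
      constructor
      · rintro ⟨-, h2⟩ j
        rw [← congrFun h2 j]
      · intro h
        exact ⟨fun j => (h j) ▸ hk.2 j, funext h⟩
    rw [Finset.filter_congr fun g _ => this g]
    exact card_fiber k hk.1.1
  · intro g hg
    rw [Finset.mem_coe, Finset.mem_filter] at hg ⊢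
    refine ⟨Finset.mem_piAntidiag.2 ⟨?_, fun j _ => mem_univ j⟩, hg.2⟩
    have := Finset.card_eq_sum_card_fiberwise
      (f := g) (s := (univ : Finset (Fin p))) (t := (univ : Finset (Fin m)))
      (fun i _ => mem_univ (g i))
    rw [card_univ, Fintype.card_fin] at this
    exact this.symm

end Partitions

private lemma mult_real {m : ℕ} (f : Fin m → ℕ) :
    (Nat.multinomial (univ : Finset (Fin m)) f : ℝ)
      = ((∑ j, f j).factorial : ℝ) / ∏ j, ((f j).factorial : ℝ) := by
  rw [eq_div_iff (by positivity), mul_comm]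
  exact_mod_cast congrArg (Nat.cast (R := ℝ)) (Nat.multinomial_spec univ f)

theorem stmt_1 (m r : ℕ) (hm : 0 < m) (hr : 0 < r) (p : ℕ) (hp : r * m ≤ p) :
    (stirlingAssoc r p m : ℝ) =
      (p.factorial : ℝ) /
          ((m.factorial : ℝ) * (r.factorial : ℝ) ^ m * ((p - r * m).factorial : ℝ)) *
        momentM r m (p - r * m) := by
  classical
  set K := p - r * m with hK
  have hKrm : K + r * m = p := Nat.sub_add_cancel hp
  -- counting identity
  have hcount : stirlingAssoc r p m * m.factorial
      = ∑ n ∈ (piAntidiag (univ : Finset (Fin m)) p).filter (fun n => ∀ j, r ≤ n j),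
          Nat.multinomial univ n := by
    rw [← count1 p m r hr, count2 p m r]
  -- reindex the sum
  have hre : ∑ n ∈ (piAntidiag (univ : Finset (Fin m)) p).filter (fun n => ∀ j, r ≤ n j),
        (Nat.multinomial univ n : ℝ)
      = ∑ k ∈ piAntidiag (univ : Finset (Fin m)) K,
          (Nat.multinomial univ (fun j => k j + r) : ℝ) := by
    refine Finset.sum_nbij' (i := fun n => fun j => n j - r) (j := fun k => fun j => k j + r)
      ?_ ?_ ?_ ?_ ?_
    · intro n hn
      rw [Finset.mem_filter, Finset.mem_piAntidiag] at hn
      rw [Finset.mem_piAntidiag]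
      refine ⟨?_, fun j _ => mem_univ j⟩
      have h1 : ∑ j, (n j - r + r) = ∑ j, n j :=
        Finset.sum_congr rfl fun j _ => Nat.sub_add_cancel (hn.2 j)
      rw [Finset.sum_add_distrib, Finset.sum_const, card_univ, Fintype.card_fin,
        smul_eq_mul, hn.1.1] at h1
      exact Nat.add_right_cancel (h1.trans (by rw [← hKrm, mul_comm r m]))
    · intro k hk
      rw [Finset.mem_piAntidiag] at hk
      rw [Finset.mem_filter, Finset.mem_piAntidiag]
      refine ⟨⟨?_, fun j _ => mem_univ j⟩, fun j => Nat.le_add_left r (k j)⟩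
      rw [Finset.sum_add_distrib, Finset.sum_const, card_univ, Fintype.card_fin,
        smul_eq_mul, hk.1, mul_comm m r]
      exact hKrm
    · intro n hn
      rw [Finset.mem_filter] at hn
      funext j
      show n j - r + r = n j
      exact Nat.sub_add_cancel (hn.2 j)
    · intro k _
      funext j
      show k j + r - r = k j
      simp
    · intro n hn
      rw [Finset.mem_filter] at hn
      exact congrArg (fun f => ((Nat.multinomial univ f : ℕ) : ℝ))
        (funext fun j => (Nat.sub_add_cancel (hn.2 j)).symm)
  -- per-term identity
  have hterm : ∀ k ∈ piAntidiag (univ : Finset (Fin m)) K,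
      (Nat.multinomial univ (fun j => k j + r) : ℝ)
        = ((p.factorial : ℝ) / ((r.factorial : ℝ) ^ m * (K.factorial : ℝ)))
            * ((Nat.multinomial univ k : ℝ) *
              ∏ i, (((k i).factorial * r.factorial : ℝ) / ((k i + r).factorial))) := by
    intro k hk
    rw [Finset.mem_piAntidiag] at hk
    have hsum1 : ∑ j, (k j + r) = p := by
      rw [Finset.sum_add_distrib, Finset.sum_const, card_univ, Fintype.card_fin,
        smul_eq_mul, hk.1, mul_comm m r, hKrm]
    rw [mult_real, mult_real, hsum1, hk.1]
    have hprod : (∏ i, (((k i).factorial * r.factorial : ℝ) / ((k i + r).factorial)))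
        = ((∏ i, ((k i).factorial : ℝ)) * (r.factorial : ℝ) ^ m) /
            (∏ i, (((k i) + r).factorial : ℝ)) := by
      rw [Finset.prod_div_distrib, Finset.prod_mul_distrib, Finset.prod_const, card_univ,
        Fintype.card_fin]
    rw [hprod]
    have h1 : (∏ i, (((k i) + r).factorial : ℝ)) ≠ 0 := by positivity
    have h2 : (∏ i, ((k i).factorial : ℝ)) ≠ 0 := by positivity
    have h3 : ((r.factorial : ℝ)) ≠ 0 := by positivity
    have h4 : ((K.factorial : ℝ)) ≠ 0 := by positivity
    field_simp
  -- combine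
  have hMM := momentM_eq r m K hr
  have hmain : ((m.factorial : ℝ)) * (stirlingAssoc r p m : ℝ)
      = ((p.factorial : ℝ) / ((r.factorial : ℝ) ^ m * (K.factorial : ℝ)))
          * momentM r m K := by
    have hc : ((stirlingAssoc r p m * m.factorial : ℕ) : ℝ)
        = ∑ n ∈ (piAntidiag (univ : Finset (Fin m)) p).filter (fun n => ∀ j, r ≤ n j),
            (Nat.multinomial univ n : ℝ) := by
      rw [hcount]; push_cast; rfl
    push_cast at hc
    rw [mul_comm ((m.factorial : ℝ))]
    rw [hc, hre, Finset.sum_congr rfl hterm, ← Finset.mul_sum, hMM]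
  have hm0 : ((m.factorial : ℝ)) ≠ 0 := by positivity
  apply mul_left_cancel₀ hm0
  rw [hmain]
  have h3 : ((r.factorial : ℝ)) ≠ 0 := by positivity
  have h4 : ((K.factorial : ℝ)) ≠ 0 := by positivity
  field_simp
end

section
/- Let k be a natural number, m a positive integer, and r an integer with r ≥ 2. Then r^k · M_r(k,m) ≤ (r/(r−1))^{2k} · (m−1+k)!/(m−1)!. -/
open MeasureTheory Set
open MeasureTheory Set

noncomputable def Jint (r j : ℕ) : ℝ := ∫ x in Set.Icc (0:ℝ) 1, x ^ j * ((r:ℝ) * (1 - x) ^ (r - 1))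

lemma Jint_nonneg (r j : ℕ) : 0 ≤ Jint r j := by
  apply setIntegral_nonneg measurableSet_Icc
  intro x hx
  simp only [mem_Icc] at hx
  have h1 : (0:ℝ) ≤ 1 - x := by linarith [hx.2]
  have h0 : (0:ℝ) ≤ x := hx.1
  positivity

lemma Jint_zero (r : ℕ) (hr : 2 ≤ r) : Jint r 0 = 1 := by
  have hr0 : (r:ℝ) ≠ 0 := by positivity
  simp only [Jint, pow_zero, one_mul]
  rw [MeasureTheory.integral_Icc_eq_integral_Ioc, ← intervalIntegral.integral_of_le (by norm_num : (0:ℝ) ≤ 1)]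
  rw [intervalIntegral.integral_const_mul]
  have h2 : ∫ x in (0:ℝ)..1, (1 - x) ^ (r-1) = ∫ x in (0:ℝ)..1, x ^ (r-1) := by
    have := intervalIntegral.integral_comp_sub_left (a := (0:ℝ)) (b := 1) (fun x => x ^ (r-1)) 1
    simpa using this
  rw [h2, integral_pow]
  have h3 : r - 1 + 1 = r := by omega
  rw [h3]
  simp
  field_simp
  have h4 : ((r - 1 : ℕ) : ℝ) + 1 = r := by exact_mod_cast h3
  rw [h4, zero_pow (by omega)]; ring


lemma parts_key (r n : ℕ) (hr : 2 ≤ r) :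
    ∫ x in (0:ℝ)..1, ((r:ℝ) * x^(n+1) * (1-x)^(r-1))
      = ∫ x in (0:ℝ)..1, ((n+1:ℝ) * x^n * (1-x)^r) := by
  have hd : ∀ x ∈ Set.uIcc (0:ℝ) 1, HasDerivAt (fun y : ℝ => -(y^(n+1) * (1-y)^r))
      ((r:ℝ) * x^(n+1) * (1-x)^(r-1) - (n+1:ℝ) * x^n * (1-x)^r) x := by
    intro x _
    have h1 : HasDerivAt (fun y : ℝ => y^(n+1)) ((n+1:ℝ) * x^n) x := by
      simpa using (hasDerivAt_pow (n+1) x)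
    have h2 : HasDerivAt (fun y : ℝ => (1-y)^r) (-((r:ℝ) * (1-x)^(r-1))) x := by
      have hb : HasDerivAt (fun y : ℝ => 1 - y) (-1) x := by
        simpa using ((hasDerivAt_id x).const_sub 1)
      have := (hasDerivAt_pow r (1-x)).comp x hb
      refine this.congr_deriv ?_
      ring
    have := (h1.mul h2).neg
    refine this.congr_deriv ?_
    ring
  have hcont1 : IntervalIntegrable (fun x : ℝ => (r:ℝ) * x^(n+1) * (1-x)^(r-1) - (n+1:ℝ) * x^n * (1-x)^r) volume 0 1 := by
    apply Continuous.intervalIntegrable; continuity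
  have h0 := intervalIntegral.integral_eq_sub_of_hasDerivAt hd hcont1
  simp only [one_pow, sub_self, zero_pow, mul_zero, zero_mul, neg_zero, sub_zero] at h0
  have hA : IntervalIntegrable (fun x : ℝ => (r:ℝ) * x^(n+1) * (1-x)^(r-1)) volume 0 1 := by
    apply Continuous.intervalIntegrable; continuity
  have hB : IntervalIntegrable (fun x : ℝ => (n+1:ℝ) * x^n * (1-x)^r) volume 0 1 := by
    apply Continuous.intervalIntegrable; continuity
  rw [intervalIntegral.integral_sub hA hB] at h0
  rw [show ((0:ℝ)^r) = 0 from zero_pow (by omega), show ((0:ℝ)^(n+1)) = 0 from zero_pow (by omega)] at h0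
  simp only [mul_zero, zero_mul, neg_zero, sub_zero, mul_one] at h0
  linarith [h0]

lemma Jint_interval (r j : ℕ) : Jint r j = ∫ x in (0:ℝ)..1, (r:ℝ) * x ^ j * (1 - x) ^ (r-1) := by
  rw [Jint, MeasureTheory.integral_Icc_eq_integral_Ioc,
    ← intervalIntegral.integral_of_le (by norm_num : (0:ℝ) ≤ 1)]
  congr 1; funext x; ring

lemma Jint_rec (r n : ℕ) (hr : 2 ≤ r)
    (hpk : ∫ x in (0:ℝ)..1, ((r:ℝ) * x^(n+1) * (1-x)^(r-1))
      = ∫ x in (0:ℝ)..1, ((n+1:ℝ) * x^n * (1-x)^r)) :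
    (r:ℝ) * Jint r (n+1) ≤ ((n:ℝ)+1) * Jint r n := by
  have hrpos : (0:ℝ) < r := by positivity
  rw [Jint_interval, Jint_interval, hpk]
  have hmono : ∫ x in (0:ℝ)..1, ((n+1:ℝ) * x^n * (1-x)^r)
      ≤ ∫ x in (0:ℝ)..1, ((n+1:ℝ) * x^n * (1-x)^(r-1)) := by
    apply intervalIntegral.integral_mono_on (by norm_num)
    · apply Continuous.intervalIntegrable; continuity
    · apply Continuous.intervalIntegrable; continuity
    · intro x hx
      simp only [mem_Icc] at hx
      have h0 : (0:ℝ) ≤ 1 - x := by linarith [hx.2]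
      have h1 : (1:ℝ) - x ≤ 1 := by linarith [hx.1]
      have : (1-x)^r ≤ (1-x)^(r-1) := pow_le_pow_of_le_one h0 h1 (by omega)
      have hxn : (0:ℝ) ≤ (n+1:ℝ) * x^n := mul_nonneg (by positivity) (pow_nonneg hx.1 n)
      exact mul_le_mul_of_nonneg_left this hxn
  calc (r:ℝ) * ∫ x in (0:ℝ)..1, ((n+1:ℝ) * x^n * (1-x)^r)
      ≤ (r:ℝ) * ∫ x in (0:ℝ)..1, ((n+1:ℝ) * x^n * (1-x)^(r-1)) := by
        exact mul_le_mul_of_nonneg_left hmono hrpos.le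
    _ = ((n:ℝ)+1) * ∫ x in (0:ℝ)..1, ((r:ℝ) * x^n * (1-x)^(r-1)) := by
        rw [← intervalIntegral.integral_const_mul, ← intervalIntegral.integral_const_mul]
        congr 1; funext x; ring


lemma cube_prod_integral {m : ℕ} (f : Fin m → ℝ → ℝ) :
    ∫ x in Set.Icc (0 : Fin m → ℝ) 1, ∏ i, f i (x i)
      = ∏ i, ∫ t in Set.Icc (0:ℝ) 1, f i t := by
  have key : ∀ x : Fin m → ℝ,
      (Set.Icc (0 : Fin m → ℝ) 1).indicator (fun y => ∏ i, f i (y i)) x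
        = ∏ i, (Set.Icc (0:ℝ) 1).indicator (f i) (x i) := by
    intro x
    by_cases hx : x ∈ Set.Icc (0 : Fin m → ℝ) 1
    · rw [Set.indicator_of_mem hx]
      have hxi : ∀ i, x i ∈ Set.Icc (0:ℝ) 1 := by
        rw [← Set.pi_univ_Icc] at hx
        intro i; exact hx i (Set.mem_univ i)
      exact Finset.prod_congr rfl fun i _ => (Set.indicator_of_mem (hxi i) _).symm
    · rw [Set.indicator_of_notMem hx]
      rw [← Set.pi_univ_Icc, Set.mem_univ_pi, not_forall] at hx
      obtain ⟨i, hi⟩ := hx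
      exact (Finset.prod_eq_zero (Finset.mem_univ i) (Set.indicator_of_notMem hi _)).symm
  rw [← MeasureTheory.integral_indicator measurableSet_Icc]
  simp_rw [key]
  rw [MeasureTheory.integral_fintype_prod_volume_eq_prod (ι := Fin m)
    (fun i => (Set.Icc (0:ℝ) 1).indicator (f i))]
  exact Finset.prod_congr rfl fun i _ =>
    MeasureTheory.integral_indicator measurableSet_Icc

lemma card_piAntidiag_le (m k : ℕ) :
    ((Finset.univ : Finset (Fin m)).piAntidiag k).card ≤ (m + k - 1).choose k := by
  classical
  have hcard : ∀ d ∈ (Finset.univ : Finset (Fin m)).piAntidiag k,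
      (Multiset.card ((Finset.univ : Finset (Fin m)).val.bind
        fun i => Multiset.replicate (d i) i)) = k := by
    intro d hd
    rw [Finset.mem_piAntidiag] at hd
    rw [Multiset.card_bind]
    simp only [Function.comp, Multiset.card_replicate]
    exact hd.1
  have hcount : ∀ d : Fin m → ℕ, ∀ j : Fin m,
      Multiset.count j ((Finset.univ : Finset (Fin m)).val.bind
        fun i => Multiset.replicate (d i) i) = d j := by
    intro d j
    rw [Multiset.count_bind]
    rw [show (Multiset.map (fun i => Multiset.count j (Multiset.replicate (d i) i))
        (Finset.univ : Finset (Fin m)).val)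
      = Multiset.map (fun i => if i = j then d i else 0) Finset.univ.val by
        apply Multiset.map_congr rfl; intro i _; rw [Multiset.count_replicate]]
    rw [← Finset.sum_eq_multiset_sum]
    simp
  have h1 : ((Finset.univ : Finset (Fin m)).piAntidiag k).card
      ≤ ((Finset.univ : Finset (Sym (Fin m) k)).image Sym.toMultiset).card := by
    apply Finset.card_le_card_of_injOn
      (fun d => (Finset.univ : Finset (Fin m)).val.bind fun i => Multiset.replicate (d i) i)
    · intro d hd
      exact Finset.mem_image.2 ⟨⟨_, hcard d hd⟩, Finset.mem_univ _, rfl⟩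
    · intro d _ e _ hde
      dsimp only at hde
      funext j
      rw [← hcount d j, ← hcount e j, hde]
  calc ((Finset.univ : Finset (Fin m)).piAntidiag k).card
      ≤ _ := h1
    _ ≤ (Finset.univ : Finset (Sym (Fin m) k)).card := Finset.card_image_le
    _ = Fintype.card (Sym (Fin m) k) := rfl
    _ = Nat.multichoose m k := Sym.card_sym_fin_eq_multichoose m k
    _ = (m + k - 1).choose k := Nat.multichoose_eq m k

lemma Jint_bound (r : ℕ) (hr : 2 ≤ r) (j : ℕ) : (r:ℝ)^j * Jint r j ≤ (j.factorial : ℝ) := by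
  induction j with
  | zero => simp [Jint_zero r hr]
  | succ n ih =>
    have hrec := Jint_rec r n hr (parts_key r n hr)
    have hrpos : (0:ℝ) < r := by positivity
    calc (r:ℝ)^(n+1) * Jint r (n+1) = (r:ℝ)^n * ((r:ℝ) * Jint r (n+1)) := by ring
      _ ≤ (r:ℝ)^n * (((n:ℝ)+1) * Jint r n) := by
          apply mul_le_mul_of_nonneg_left hrec (by positivity)
      _ = ((n:ℝ)+1) * ((r:ℝ)^n * Jint r n) := by ring
      _ ≤ ((n:ℝ)+1) * (n.factorial : ℝ) := by
          apply mul_le_mul_of_nonneg_left ih (by positivity)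
      _ = ((n+1).factorial : ℝ) := by push_cast [Nat.factorial_succ]; ring

lemma momentM_expand (r m k : ℕ) :
    momentM r m k = ∑ d ∈ (Finset.univ : Finset (Fin m)).piAntidiag k,
      (Nat.multinomial Finset.univ d : ℝ) * ∏ i, Jint r (d i) := by
  rw [momentM]
  have h1 : ∀ x : Fin m → ℝ, (∑ i, x i)^k * ∏ i, ((r:ℝ) * (1 - x i)^(r-1))
      = ∑ d ∈ (Finset.univ : Finset (Fin m)).piAntidiag k,
          (Nat.multinomial Finset.univ d : ℝ) *
          ∏ i, ((x i)^(d i) * ((r:ℝ) * (1 - x i)^(r-1))) := by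
    intro x
    rw [Finset.sum_pow_eq_sum_piAntidiag, Finset.sum_mul]
    refine Finset.sum_congr rfl fun d _ => ?_
    rw [mul_assoc, ← Finset.prod_mul_distrib]
  simp_rw [h1]
  rw [MeasureTheory.integral_finset_sum]
  · refine Finset.sum_congr rfl fun d _ => ?_
    rw [MeasureTheory.integral_const_mul]
    congr 1
    have := cube_prod_integral (m := m) (fun i t => t^(d i) * ((r:ℝ)*(1-t)^(r-1)))
    rw [this]
    rfl
  · intro d _
    apply Continuous.integrableOn_Icc
    continuity

theorem stmt_14 (k : ℕ) (m : ℕ) (hm : 0 < m) (r : ℕ) (hr : 2 ≤ r) :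
    (r : ℝ) ^ k * momentM r m k ≤
      ((r : ℝ) / ((r : ℝ) - 1)) ^ (2 * k) *
        ((m - 1 + k).factorial : ℝ) / ((m - 1).factorial : ℝ) := by
  have hr2 : (2:ℝ) ≤ (r:ℝ) := by exact_mod_cast hr
  have hr1 : (0:ℝ) < (r:ℝ) - 1 := by linarith
  have hq1 : (1:ℝ) ≤ (r:ℝ) / ((r:ℝ) - 1) := by
    rw [le_div_iff₀ hr1]; linarith
  have hqk : (1:ℝ) ≤ ((r:ℝ) / ((r:ℝ) - 1)) ^ (2*k) := one_le_pow₀ hq1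
  -- main bound : LHS ≤ (m-1+k)!/(m-1)!
  have hmain : (r:ℝ)^k * momentM r m k ≤ ((m-1+k).factorial : ℝ) / ((m-1).factorial : ℝ) := by
    rw [momentM_expand, Finset.mul_sum]
    have hterm : ∀ d ∈ (Finset.univ : Finset (Fin m)).piAntidiag k,
        (r:ℝ)^k * ((Nat.multinomial Finset.univ d : ℝ) * ∏ i, Jint r (d i))
          ≤ (k.factorial : ℝ) := by
      intro d hd
      have hsum : ∑ i, d i = k := (Finset.mem_piAntidiag.1 hd).1
      have hpow : (r:ℝ)^k = ∏ i, (r:ℝ)^(d i) := by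
        rw [Finset.prod_pow_eq_pow_sum, hsum]
      have hprod : ∏ i, ((r:ℝ)^(d i) * Jint r (d i)) ≤ ∏ i, ((d i).factorial : ℝ) := by
        apply Finset.prod_le_prod
        · intro i _; exact mul_nonneg (by positivity) (Jint_nonneg r (d i))
        · intro i _; exact Jint_bound r hr (d i)
      calc (r:ℝ)^k * ((Nat.multinomial Finset.univ d : ℝ) * ∏ i, Jint r (d i))
          = (Nat.multinomial Finset.univ d : ℝ) * ((∏ i, (r:ℝ)^(d i)) * ∏ i, Jint r (d i)) := by
            rw [← hpow]; ring
        _ = (Nat.multinomial Finset.univ d : ℝ) * ∏ i, ((r:ℝ)^(d i) * Jint r (d i)) := by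
            rw [Finset.prod_mul_distrib]
        _ ≤ (Nat.multinomial Finset.univ d : ℝ) * ∏ i, ((d i).factorial : ℝ) := by
            apply mul_le_mul_of_nonneg_left hprod (by positivity)
        _ = (k.factorial : ℝ) := by
            rw [← Nat.cast_prod, ← Nat.cast_mul, mul_comm, Nat.multinomial_spec, hsum]
    calc ∑ d ∈ (Finset.univ : Finset (Fin m)).piAntidiag k,
          (r:ℝ)^k * ((Nat.multinomial Finset.univ d : ℝ) * ∏ i, Jint r (d i))
        ≤ ∑ d ∈ (Finset.univ : Finset (Fin m)).piAntidiag k, (k.factorial : ℝ) :=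
          Finset.sum_le_sum hterm
      _ = (((Finset.univ : Finset (Fin m)).piAntidiag k).card : ℝ) * (k.factorial : ℝ) := by
          rw [Finset.sum_const, nsmul_eq_mul]
      _ ≤ ((m-1+k).choose k : ℝ) * (k.factorial : ℝ) := by
          apply mul_le_mul_of_nonneg_right _ (by positivity)
          have := card_piAntidiag_le m k
          have he : m + k - 1 = m - 1 + k := by omega
          rw [he] at this
          exact_mod_cast this
      _ = ((m-1+k).factorial : ℝ) / ((m-1).factorial : ℝ) := by
          have h := Nat.choose_mul_factorial_mul_factorial (Nat.le_add_left k (m-1))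
          rw [show m - 1 + k - k = m - 1 by omega] at h
          have hfpos : (0:ℝ) < ((m-1).factorial : ℝ) := by
            exact_mod_cast Nat.factorial_pos (m-1)
          field_simp
          exact_mod_cast h
  calc (r:ℝ)^k * momentM r m k
      ≤ ((m-1+k).factorial : ℝ) / ((m-1).factorial : ℝ) := hmain
    _ ≤ ((r:ℝ) / ((r:ℝ) - 1)) ^ (2*k) * ((m-1+k).factorial : ℝ) / ((m-1).factorial : ℝ) := by
        have h0 : (0:ℝ) ≤ ((m-1+k).factorial : ℝ) := by positivity
        have hB : (0:ℝ) < ((m-1).factorial : ℝ) := by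
          exact_mod_cast Nat.factorial_pos (m-1)
        rw [div_le_div_iff_of_pos_right hB]
        exact le_mul_of_one_le_left h0 hqk
end
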